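/- Let d, d' ≥ 0 be integers with d + d' ≥ 1, and let Γ be a connected directed graph without self-loops with vertex set Γ₀ (|Γ₀| = n) and edge set Γ₁ (|Γ₁| = m ≥ 1). Define the smooth map φ : (ℝ^d)^{Γ₀} × (ℝ^{d'})^{Γ₀} × (0,∞)^{Γ₁} → (ℝ^d)^{Γ₁} × (ℝ^{d'})^{Γ₁} by φ((a^i), (q^i), (t_e))_e = ( (a^{h(e)} − a^{t(e)})/(2 t_e), (q^{h(e)} − q^{t(e)})/(2 √t_e) ). If (d + d') n < (d + d' − 1) m + d + d' + 1, then at every point of the domain the Fréchet derivative of φ is not surjective; indeed its rank is at most (d + d') n + m − (d + d' + 1), because the derivative annihilates the d + d' translation vectors Σ_i ∂/∂a^i_j (1 ≤ j ≤ d), Σ_i ∂/∂q^i_j (1 ≤ j ≤ d'), and the scaling vector Σ_e t_e ∂/∂t_e + Σ_{i,j} a^i_j ∂/∂a^i_j + (1/2) Σ_{i,j} q^i_j ∂/∂q^i_j. -/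

import Mathlib

open Matrix MeasureTheory
open scoped BigOperators Classical

/-- A directed graph with `n + 1` vertices (indexed by `Fin (n + 1)`) and `m` edges
(indexed by `Fin m`), given by head and tail maps and having no self-loops. -/
structure DGraph (n m : ℕ) where
  head : Fin m → Fin (n + 1)
  tail : Fin m → Fin (n + 1)
  no_self_loop : ∀ e, head e ≠ tail e

namespace DGraph

variable {n m : ℕ}

/-- The incidence matrix: `ρ e i = 1` if `head e = i`, `-1` if `tail e = i`, `0` otherwise. -/
def inc (G : DGraph n m) : Matrix (Fin m) (Fin (n + 1)) ℝ := fun e i =>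
  if G.head e = i then 1 else if G.tail e = i then -1 else 0

/-- The underlying undirected (simple) adjacency graph determined by a set of edges. -/
def adjGraph (G : DGraph n m) (S : Set (Fin m)) : SimpleGraph (Fin (n + 1)) :=
  SimpleGraph.fromRel (fun i j => ∃ e ∈ S, G.head e = i ∧ G.tail e = j)

/-- Connectedness of the underlying undirected multigraph. -/
def Conn (G : DGraph n m) : Prop := (G.adjGraph Set.univ).Connected

/-- A spanning tree: a set of `n` edges (one fewer than the number `n + 1` of vertices)
whose edges connect all the vertices. -/
def IsSpanningTree (G : DGraph n m) (T : Finset (Fin m)) : Prop :=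
  T.card = n ∧ (G.adjGraph (T : Set (Fin m))).Connected

/-- The weighted Laplacian `M_Γ(t)_{ij} = ∑_e ρ^e_i (1/t_e) ρ^e_j` over the first `n`
vertices (the last vertex deleted). -/
noncomputable def lap (G : DGraph n m) (t : Fin m → ℝ) : Matrix (Fin n) (Fin n) ℝ :=
  fun i j => ∑ e, G.inc e i.castSucc * (1 / t e) * G.inc e j.castSucc

/-- The reduced incidence matrix: delete the column of the last vertex. -/
def redInc (G : DGraph n m) : Matrix (Fin m) (Fin n) ℝ := fun e i => G.inc e i.castSucc

end DGraph

/-- The map `φ((a^i), (q^i), (t_e)) = ((a^{h(e)} - a^{t(e)})/(2 t_e),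
(q^{h(e)} - q^{t(e)})/(2 √t_e))` built from the Schwinger parameters of a graph. -/
noncomputable def phiMap {n m : ℕ} (d d' : ℕ) (G : DGraph n m) :
    ((Fin (n + 1) → Fin d → ℝ) × (Fin (n + 1) → Fin d' → ℝ) × (Fin m → ℝ)) →
      ((Fin m → Fin d → ℝ) × (Fin m → Fin d' → ℝ)) :=
  fun p =>
    (fun e k => (p.1 (G.head e) k - p.1 (G.tail e) k) / (2 * p.2.2 e),
     fun e k => (p.2.1 (G.head e) k - p.2.1 (G.tail e) k) / (2 * Real.sqrt (p.2.2 e)))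

open Filter in
private theorem fderiv_apply_eq_zero_of_curve {E F : Type*} [NormedAddCommGroup E] [NormedSpace ℝ E]
    [NormedAddCommGroup F] [NormedSpace ℝ F]
    {f : E → F} {p : E} (hf : DifferentiableAt ℝ f p)
    {γ : ℝ → E} {v : E} (hγ0 : γ 0 = p) (hγ : HasDerivAt γ v 0)
    (hconst : ∀ᶠ c in nhds (0:ℝ), f (γ c) = f p) :
    fderiv ℝ f p v = 0 := by
  have h1 : HasDerivAt (fun c => f (γ c)) (fderiv ℝ f p v) 0 := by
    have := hf.hasFDerivAt
    rw [← hγ0] at this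
    simpa [Function.comp_def, hγ0] using this.comp_hasDerivAt 0 hγ
  have h2 : HasDerivAt (fun c => f (γ c)) 0 0 :=
    (hasDerivAt_const (0:ℝ) (f p)).congr_of_eventuallyEq hconst
  exact h1.unique h2

private theorem phiMap_diff {n m : ℕ} (d d' : ℕ) (G : DGraph n m)
    (p : (Fin (n + 1) → Fin d → ℝ) × (Fin (n + 1) → Fin d' → ℝ) × (Fin m → ℝ))
    (hp : ∀ e, 0 < p.2.2 e) : DifferentiableAt ℝ (phiMap d d' G) p := by
  apply DifferentiableAt.prodMk
  · rw [differentiableAt_pi]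
    intro e
    rw [differentiableAt_pi]
    intro k
    have h1 : DifferentiableAt ℝ
        (fun x : (Fin (n + 1) → Fin d → ℝ) × (Fin (n + 1) → Fin d' → ℝ) × (Fin m → ℝ) =>
          x.1 (G.head e) k - x.1 (G.tail e) k) p := by fun_prop
    have h2 : DifferentiableAt ℝ
        (fun x : (Fin (n + 1) → Fin d → ℝ) × (Fin (n + 1) → Fin d' → ℝ) × (Fin m → ℝ) =>
          2 * x.2.2 e) p := by fun_prop
    simp only [div_eq_mul_inv]
    exact h1.mul (h2.inv (ne_of_gt (mul_pos two_pos (hp e))))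
  · rw [differentiableAt_pi]
    intro e
    rw [differentiableAt_pi]
    intro k
    have h1 : DifferentiableAt ℝ
        (fun x : (Fin (n + 1) → Fin d → ℝ) × (Fin (n + 1) → Fin d' → ℝ) × (Fin m → ℝ) =>
          x.2.1 (G.head e) k - x.2.1 (G.tail e) k) p := by fun_prop
    have h0 : DifferentiableAt ℝ
        (fun x : (Fin (n + 1) → Fin d → ℝ) × (Fin (n + 1) → Fin d' → ℝ) × (Fin m → ℝ) =>
          x.2.2 e) p := by fun_prop
    have h2 := (h0.sqrt (ne_of_gt (hp e))).const_mul (2:ℝ)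
    simp only [div_eq_mul_inv]
    exact h1.mul (h2.inv (ne_of_gt (mul_pos two_pos (Real.sqrt_pos.mpr (hp e)))))

private theorem phiMap_ker_a {n m : ℕ} (d d' : ℕ) (G : DGraph n m)
    (p : (Fin (n + 1) → Fin d → ℝ) × (Fin (n + 1) → Fin d' → ℝ) × (Fin m → ℝ))
    (hp : ∀ e, 0 < p.2.2 e) (v : Fin d → ℝ) :
    fderiv ℝ (phiMap d d' G) p ((fun _ => v), 0, 0) = 0 := by
  apply fderiv_apply_eq_zero_of_curve (phiMap_diff d d' G p hp)
    (γ := fun c => p + c • (((fun _ => v), 0, 0) :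
      (Fin (n + 1) → Fin d → ℝ) × (Fin (n + 1) → Fin d' → ℝ) × (Fin m → ℝ)))
  · simp
  · simpa using ((hasDerivAt_id (0:ℝ)).smul_const
      ((((fun _ => v), 0, 0)) :
      (Fin (n + 1) → Fin d → ℝ) × (Fin (n + 1) → Fin d' → ℝ) × (Fin m → ℝ))).const_add p
  · refine Filter.Eventually.of_forall (fun c => ?_)
    simp only [phiMap]
    refine Prod.ext ?_ ?_ <;> funext e k <;>
      simp [Prod.fst_add, Prod.snd_add, Pi.add_apply, Pi.smul_apply, smul_eq_mul]

private theorem phiMap_ker_q {n m : ℕ} (d d' : ℕ) (G : DGraph n m)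
    (p : (Fin (n + 1) → Fin d → ℝ) × (Fin (n + 1) → Fin d' → ℝ) × (Fin m → ℝ))
    (hp : ∀ e, 0 < p.2.2 e) (w : Fin d' → ℝ) :
    fderiv ℝ (phiMap d d' G) p (0, (fun _ => w), 0) = 0 := by
  apply fderiv_apply_eq_zero_of_curve (phiMap_diff d d' G p hp)
    (γ := fun c => p + c • ((0, (fun _ => w), 0) :
      (Fin (n + 1) → Fin d → ℝ) × (Fin (n + 1) → Fin d' → ℝ) × (Fin m → ℝ)))
  · simp
  · simpa using ((hasDerivAt_id (0:ℝ)).smul_const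
      (((0, (fun _ => w), 0)) :
      (Fin (n + 1) → Fin d → ℝ) × (Fin (n + 1) → Fin d' → ℝ) × (Fin m → ℝ))).const_add p
  · refine Filter.Eventually.of_forall (fun c => ?_)
    simp only [phiMap]
    refine Prod.ext ?_ ?_ <;> funext e k <;>
      simp [Prod.fst_add, Prod.snd_add, Pi.add_apply, Pi.smul_apply, smul_eq_mul]

private theorem phiMap_ker_scale {n m : ℕ} (d d' : ℕ) (G : DGraph n m)
    (p : (Fin (n + 1) → Fin d → ℝ) × (Fin (n + 1) → Fin d' → ℝ) × (Fin m → ℝ))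
    (hp : ∀ e, 0 < p.2.2 e) :
    fderiv ℝ (phiMap d d' G) p (p.1, (1 / 2 : ℝ) • p.2.1, p.2.2) = 0 := by
  apply fderiv_apply_eq_zero_of_curve (phiMap_diff d d' G p hp)
    (γ := fun c : ℝ => ((1 + c) • p.1, Real.sqrt (1 + c) • p.2.1, (1 + c) • p.2.2))
  · simp [Real.sqrt_one]
  · refine HasDerivAt.prodMk ?_ (HasDerivAt.prodMk ?_ ?_)
    · simpa using ((hasDerivAt_id (0:ℝ)).const_add (1:ℝ)).smul_const p.1
    · have h1 : HasDerivAt (fun c : ℝ => 1 + c) 1 0 := (hasDerivAt_id (0:ℝ)).const_add 1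
      have h2 : HasDerivAt (fun c : ℝ => Real.sqrt (1 + c)) ((1:ℝ)/2) 0 := by
        have := (Real.hasDerivAt_sqrt (by norm_num : ((1:ℝ) + 0) ≠ 0)).comp 0 h1
        simpa [Real.sqrt_one, Function.comp_def] using this
      simpa using h2.smul_const p.2.1
    · simpa using ((hasDerivAt_id (0:ℝ)).const_add (1:ℝ)).smul_const p.2.2
  · have hev : ∀ᶠ c in nhds (0:ℝ), (-1:ℝ) < c := eventually_gt_nhds (by norm_num)
    filter_upwards [hev] with c hc
    have h1c : (0:ℝ) < 1 + c := by linarith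
    simp only [phiMap]
    refine Prod.ext ?_ ?_
    · funext e k
      simp only [Pi.smul_apply, smul_eq_mul]
      rw [show (1 + c) * p.1 (G.head e) k - (1 + c) * p.1 (G.tail e) k
            = (1 + c) * (p.1 (G.head e) k - p.1 (G.tail e) k) by ring,
          show 2 * ((1 + c) * p.2.2 e) = (1 + c) * (2 * p.2.2 e) by ring,
          mul_div_mul_left _ _ (ne_of_gt h1c)]
    · funext e k
      simp only [Pi.smul_apply, smul_eq_mul]
      rw [Real.sqrt_mul (le_of_lt h1c),
          show Real.sqrt (1 + c) * p.2.1 (G.head e) k - Real.sqrt (1 + c) * p.2.1 (G.tail e) k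
            = Real.sqrt (1 + c) * (p.2.1 (G.head e) k - p.2.1 (G.tail e) k) by ring,
          show 2 * (Real.sqrt (1 + c) * Real.sqrt (p.2.2 e))
            = Real.sqrt (1 + c) * (2 * Real.sqrt (p.2.2 e)) by ring,
          mul_div_mul_left _ _ (ne_of_gt (Real.sqrt_pos.mpr h1c))]


set_option maxHeartbeats 1000000

/-- If `Γ` is connected without self-loops and
`(d + d') |Γ₀| < (d + d' - 1) |Γ₁| + d + d' + 1`, then at every point of the domain
(where all Schwinger parameters are positive) the derivative of `φ` is not surjective:
its rank is at most `(d + d') |Γ₀| + |Γ₁| - (d + d' + 1)`, because the derivative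
annihilates the `d + d'` translation vectors and the scaling vector
`∑ t_e ∂_{t_e} + ∑ a^i_j ∂_{a^i_j} + (1/2) ∑ q^i_j ∂_{q^i_j}`. -/
theorem phiMap_derivative_not_surjective {n m : ℕ} (d d' : ℕ) (hdd' : 1 ≤ d + d')
    (hm : 1 ≤ m) (G : DGraph n m) (hG : G.Conn)
    (hcount : ((d : ℤ) + d') * (n + 1) < ((d : ℤ) + d' - 1) * m + ((d : ℤ) + d' + 1))
    (p : (Fin (n + 1) → Fin d → ℝ) × (Fin (n + 1) → Fin d' → ℝ) × (Fin m → ℝ))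
    (hp : ∀ e, 0 < p.2.2 e) :
    ¬ Function.Surjective (fderiv ℝ (phiMap d d' G) p) ∧
    ((Module.finrank ℝ (LinearMap.range (fderiv ℝ (phiMap d d' G) p).toLinearMap) : ℤ) ≤
      ((d : ℤ) + d') * (n + 1) + m - ((d : ℤ) + d' + 1)) ∧
    (∀ v : Fin d → ℝ, fderiv ℝ (phiMap d d' G) p ((fun _ => v), 0, 0) = 0) ∧
    (∀ w : Fin d' → ℝ, fderiv ℝ (phiMap d d' G) p (0, (fun _ => w), 0) = 0) ∧
    fderiv ℝ (phiMap d d' G) p (p.1, (1 / 2 : ℝ) • p.2.1, p.2.2) = 0 := by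
  have hka := phiMap_ker_a d d' G p hp
  have hkq := phiMap_ker_q d d' G p hp
  have hks := phiMap_ker_scale d d' G p hp
  set f := (fderiv ℝ (phiMap d d' G) p).toLinearMap with hf
  set b : (Fin d ⊕ Fin d' ⊕ Unit) →
      ((Fin (n + 1) → Fin d → ℝ) × (Fin (n + 1) → Fin d' → ℝ) × (Fin m → ℝ)) :=
    Sum.elim (fun j => ((fun _ => Pi.single j 1), 0, 0))
      (Sum.elim (fun j => (0, (fun _ => Pi.single j 1), 0))
        (fun _ => (p.1, (1 / 2 : ℝ) • p.2.1, p.2.2))) with hb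
  have hbker : ∀ i, b i ∈ LinearMap.ker f := by
    rintro (j | j | _) <;> simp only [hb, Sum.elim_inl, Sum.elim_inr, LinearMap.mem_ker]
    · exact hka _
    · exact hkq _
    · exact hks
  have e0 : Fin m := ⟨0, hm⟩
  have hli : LinearIndependent ℝ b := by
    rw [Fintype.linearIndependent_iff]
    intro g hg
    have hscale : g (Sum.inr (Sum.inr ())) = 0 := by
      have h3 := congrArg
        (fun x : ((Fin (n + 1) → Fin d → ℝ) × (Fin (n + 1) → Fin d' → ℝ) × (Fin m → ℝ)) =>
          x.2.2 e0) hg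
      simp only [hb, Fintype.sum_sum_type, Prod.snd_sum, Prod.fst_sum, Prod.snd_add,
        Prod.fst_add, Finset.sum_apply, Pi.add_apply, Sum.elim_inl, Sum.elim_inr,
        Prod.smul_snd, Prod.smul_fst, Pi.smul_apply, smul_eq_mul, Finset.univ_unique,
        Finset.sum_singleton, mul_zero, Finset.sum_const_zero, zero_add, add_zero,
        Prod.snd_zero, Prod.fst_zero, Pi.zero_apply] at h3
      rcases mul_eq_zero.mp h3 with h | h
      · exact h
      · exact absurd h (ne_of_gt (hp e0))
    have hA : ∀ j : Fin d, g (Sum.inl j) = 0 := by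
      intro j
      have h1 := congrArg
        (fun x : ((Fin (n + 1) → Fin d → ℝ) × (Fin (n + 1) → Fin d' → ℝ) × (Fin m → ℝ)) =>
          x.1 0 j) hg
      simp only [hb, Fintype.sum_sum_type, Prod.snd_sum, Prod.fst_sum, Prod.snd_add,
        Prod.fst_add, Finset.sum_apply, Pi.add_apply, Sum.elim_inl, Sum.elim_inr,
        Prod.smul_snd, Prod.smul_fst, Pi.smul_apply, smul_eq_mul, Finset.univ_unique,
        Finset.sum_singleton, mul_zero, Finset.sum_const_zero, zero_add, add_zero,
        Prod.snd_zero, Prod.fst_zero, Pi.zero_apply, hscale, zero_mul] at h1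
      simpa [Pi.single_apply, Finset.sum_ite_eq'] using h1
    have hQ : ∀ j : Fin d', g (Sum.inr (Sum.inl j)) = 0 := by
      intro j
      have h1 := congrArg
        (fun x : ((Fin (n + 1) → Fin d → ℝ) × (Fin (n + 1) → Fin d' → ℝ) × (Fin m → ℝ)) =>
          x.2.1 0 j) hg
      simp only [hb, Fintype.sum_sum_type, Prod.snd_sum, Prod.fst_sum, Prod.snd_add,
        Prod.fst_add, Finset.sum_apply, Pi.add_apply, Sum.elim_inl, Sum.elim_inr,
        Prod.smul_snd, Prod.smul_fst, Pi.smul_apply, smul_eq_mul, Finset.univ_unique,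
        Finset.sum_singleton, mul_zero, Finset.sum_const_zero, zero_add, add_zero,
        Prod.snd_zero, Prod.fst_zero, Pi.zero_apply, hscale, zero_mul] at h1
      simpa [Pi.single_apply, Finset.sum_ite_eq'] using h1
    rintro (j | j | u)
    · exact hA j
    · exact hQ j
    · cases u; exact hscale
  have hspan : Submodule.span ℝ (Set.range b) ≤ LinearMap.ker f :=
    Submodule.span_le.mpr (by rintro _ ⟨i, rfl⟩; exact hbker i)
  have hkerdim : (d + d' + 1 : ℕ) ≤ Module.finrank ℝ (LinearMap.ker f) := by
    have h1 := finrank_span_eq_card hli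
    have h2 := Submodule.finrank_mono hspan
    rw [h1] at h2
    simp at h2; omega
  have hVdim : Module.finrank ℝ
      ((Fin (n + 1) → Fin d → ℝ) × (Fin (n + 1) → Fin d' → ℝ) × (Fin m → ℝ))
      = (n + 1) * d + ((n + 1) * d' + m) := by
    simp [Module.finrank_prod, Module.finrank_pi_fintype, Module.finrank_pi,
      Finset.sum_const, smul_eq_mul]
  have hrn := LinearMap.finrank_range_add_finrank_ker f
  rw [hVdim] at hrn
  have hrank : ((Module.finrank ℝ (LinearMap.range f) : ℤ)) ≤
      ((d : ℤ) + d') * (n + 1) + m - ((d : ℤ) + d' + 1) := by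
    have h1 : (Module.finrank ℝ (LinearMap.range f) : ℤ) +
        (Module.finrank ℝ (LinearMap.ker f) : ℤ) =
        ((n : ℤ) + 1) * d + (((n : ℤ) + 1) * d' + m) := by exact_mod_cast hrn
    have h2 : ((d : ℤ) + d' + 1) ≤ (Module.finrank ℝ (LinearMap.ker f) : ℤ) := by
      exact_mod_cast hkerdim
    nlinarith [h1, h2]
  refine ⟨?_, hrank, hka, hkq, hks⟩
  intro hsurj
  have hsurj' : Function.Surjective f := by
    rw [hf]
    simpa using hsurj
  have htop : LinearMap.range f = ⊤ := LinearMap.range_eq_top.mpr hsurj'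
  have hWdim : Module.finrank ℝ ((Fin m → Fin d → ℝ) × (Fin m → Fin d' → ℝ)) =
      m * d + m * d' := by
    simp [Module.finrank_prod, Module.finrank_pi_fintype, Module.finrank_pi,
      Finset.sum_const, smul_eq_mul]
  have hr2 : (Module.finrank ℝ (LinearMap.range f) : ℤ) = (m : ℤ) * d + m * d' := by
    rw [htop]
    have := finrank_top ℝ ((Fin m → Fin d → ℝ) × (Fin m → Fin d' → ℝ))
    rw [this, hWdim]
    push_cast
    ring
  rw [hr2] at hrank
  nlinarith [hcount, hrank]
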